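/- Let C_0 ⊆ F_2^n be a binary code with minimum weight at least 4 and let C = Span{d(E_n), e(C_0)} ⊆ F_2^{2n}. Then the set of weight-4 codewords of C equals {d(x) : x ∈ E_n, wt(x) = 2} ∪ {e(y) + d(z) : y ∈ C_0 of weight 4, z ∈ E_n, supp(z) ⊆ supp(y)}. -/

import Mathlib

/-- Hamming weight of a binary word. -/
def wt {n : ℕ} (v : Fin n → ZMod 2) : ℕ :=
  (Finset.univ.filter (fun i => v i ≠ 0)).card

/-- Size of the intersection of the supports of two binary words. -/
def interCard {n : ℕ} (v w : Fin n → ZMod 2) : ℕ :=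
  (Finset.univ.filter (fun i => v i ≠ 0 ∧ w i ≠ 0)).card

/-- The doubling map `d : F₂ⁿ → F₂^{2n}`, `(c₁,…,cₙ) ↦ (c₁,c₁,c₂,c₂,…,cₙ,cₙ)`. -/
def dbl {n : ℕ} (c : Fin n → ZMod 2) : Fin (2 * n) → ZMod 2 :=
  fun i => c ⟨(i : ℕ) / 2, by have := i.isLt; omega⟩

/-- The map `e : F₂ⁿ → F₂^{2n}`, `(c₁,…,cₙ) ↦ (0,c₁,0,c₂,…,0,cₙ)`. -/
def emap {n : ℕ} (c : Fin n → ZMod 2) : Fin (2 * n) → ZMod 2 :=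
  fun i => if (i : ℕ) % 2 = 1 then c ⟨(i : ℕ) / 2, by have := i.isLt; omega⟩ else 0

/-- The even-weight code `𝓔ₙ ⊆ F₂ⁿ`. -/
def evenCode (n : ℕ) : Set (Fin n → ZMod 2) := {c | Even (wt c)}

-- linear maps
def dblL (n : ℕ) : (Fin n → ZMod 2) →ₗ[ZMod 2] (Fin (2*n) → ZMod 2) where
  toFun := dbl
  map_add' a b := rfl
  map_smul' c a := rfl

def emapL (n : ℕ) : (Fin n → ZMod 2) →ₗ[ZMod 2] (Fin (2*n) → ZMod 2) where
  toFun := emap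
  map_add' a b := by funext i; simp only [emap, Pi.add_apply]; split <;> simp
  map_smul' c a := by funext i; simp only [emap, Pi.smul_apply, RingHom.id_apply]; split <;> simp

def sumL (n : ℕ) : (Fin n → ZMod 2) →ₗ[ZMod 2] ZMod 2 where
  toFun c := ∑ i, c i
  map_add' a b := by simp [Finset.sum_add_distrib]
  map_smul' c a := by simp [Finset.mul_sum]

lemma zmod2_cases (a : ZMod 2) : a = 0 ∨ a = 1 := by
  revert a; decide

lemma sum_eq_wt {n : ℕ} (c : Fin n → ZMod 2) : ∑ i, c i = (wt c : ZMod 2) := by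
  rw [wt, ← Finset.sum_boole]
  apply Finset.sum_congr rfl
  intro i _
  rcases zmod2_cases (c i) with h | h <;> simp [h]

lemma evenCode_eq_ker (n : ℕ) : evenCode n = ↑(LinearMap.ker (sumL n)) := by
  ext c
  simp only [evenCode, Set.mem_setOf_eq, SetLike.mem_coe, LinearMap.mem_ker, sumL,
    LinearMap.coe_mk, AddHom.coe_mk, sum_eq_wt]
  rw [ZMod.natCast_eq_zero_iff, Nat.dvd_iff_mod_eq_zero, ← Nat.even_iff]

def pairEquiv (n : ℕ) : Fin n × Fin 2 ≃ Fin (2 * n) where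
  toFun p := ⟨2 * p.1 + p.2, by have := p.1.isLt; have := p.2.isLt; omega⟩
  invFun k := (⟨(k : ℕ) / 2, by have := k.isLt; omega⟩, ⟨(k : ℕ) % 2, by omega⟩)
  left_inv p := by
    have h2 := p.2.isLt
    ext <;> simp <;> try omega
  right_inv k := by
    have := k.isLt
    ext
    simp
    omega

lemma local_wt (a b : ZMod 2) :
    ((if a ≠ 0 then 1 else 0) + (if a + b ≠ 0 then 1 else 0) : ℕ) =
      (if b ≠ 0 then 1 else 0) + 2 * (if a ≠ 0 ∧ b = 0 then 1 else 0) := by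
  revert a b; decide

lemma wt_dbl_add_emap {n : ℕ} (z y : Fin n → ZMod 2) :
    wt (dbl z + emap y) =
      wt y + 2 * (Finset.univ.filter (fun i => z i ≠ 0 ∧ y i = 0)).card := by
  classical
  have hval0 : ∀ i : Fin n, (dbl z + emap y) (pairEquiv n (i, 0)) = z i := by
    intro i
    have h0 : (2 * (i : ℕ) + (0 : Fin 2)) % 2 = 0 := by simp
    have h1 : (2 * (i : ℕ) + (0 : Fin 2)) / 2 = i := by simp
    simp only [pairEquiv, Equiv.coe_fn_mk, Pi.add_apply, dbl, emap, h0, h1]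
    simp
  have hval1 : ∀ i : Fin n, (dbl z + emap y) (pairEquiv n (i, 1)) = z i + y i := by
    intro i
    have h0 : (2 * (i : ℕ) + ((1 : Fin 2) : ℕ)) % 2 = 1 := by simp
    have h1 : (2 * (i : ℕ) + ((1 : Fin 2) : ℕ)) / 2 = i := by simp; omega
    simp only [pairEquiv, Equiv.coe_fn_mk, Pi.add_apply, dbl, emap, h0, h1]
    simp
  rw [wt, Finset.card_filter,
    ← Fintype.sum_equiv (pairEquiv n)
      (fun p => if (dbl z + emap y) (pairEquiv n p) ≠ 0 then 1 else 0)
      (fun k => if (dbl z + emap y) k ≠ 0 then 1 else 0) (fun p => rfl),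
    Fintype.sum_prod_type]
  rw [wt, Finset.card_filter, Finset.card_filter, Finset.mul_sum, ← Finset.sum_add_distrib]
  apply Finset.sum_congr rfl
  intro i _
  rw [Fin.sum_univ_two, hval0 i, hval1 i]
  exact local_wt (z i) (y i)

/-- for a binary code `C₀ ⊆ F₂ⁿ` of minimum weight at least 4 and
`C = Span{d(𝓔ₙ), e(C₀)}`, the weight-4 codewords of `C` are exactly the `d(x)` with
`x ∈ 𝓔ₙ` of weight 2, together with the `e(y) + d(z)` with `y ∈ C₀` of weight 4,
`z ∈ 𝓔ₙ` and `supp z ⊆ supp y`. -/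
theorem weight_four_codewords_description (n : ℕ)
    (C₀ : Submodule (ZMod 2) (Fin n → ZMod 2))
    (hmin : ∀ y ∈ C₀, y ≠ 0 → 4 ≤ wt y) :
    {u : Fin (2 * n) → ZMod 2 |
        u ∈ Submodule.span (ZMod 2) (dbl '' evenCode n ∪ emap '' C₀) ∧ wt u = 4} =
      {u | ∃ x : Fin n → ZMod 2, x ∈ evenCode n ∧ wt x = 2 ∧ u = dbl x} ∪
      {u | ∃ y ∈ C₀, wt y = 4 ∧ ∃ z : Fin n → ZMod 2, z ∈ evenCode n ∧
        (∀ i, z i ≠ 0 → y i ≠ 0) ∧ u = emap y + dbl z} := by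
  classical
  have hdbl : dbl = ⇑(dblL n) := rfl
  have hemap : emap = ⇑(emapL n) := rfl
  have hspan : Submodule.span (ZMod 2) (dbl '' evenCode n ∪ emap '' C₀)
      = Submodule.map (dblL n) (LinearMap.ker (sumL n)) ⊔ Submodule.map (emapL n) C₀ := by
    rw [evenCode_eq_ker, hdbl, hemap, Submodule.span_union, ← Submodule.map_span,
      ← Submodule.map_span, Submodule.span_eq, Submodule.span_eq]
  ext u
  simp only [Set.mem_setOf_eq, Set.mem_union]
  constructor
  · rintro ⟨hu, hw⟩
    rw [hspan, Submodule.mem_sup] at hu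
    obtain ⟨a, ha, b, hb, hab⟩ := hu
    obtain ⟨z, hz, rfl⟩ := ha
    obtain ⟨y, hy, rfl⟩ := hb
    rw [← hdbl, ← hemap] at hab
    subst hab
    rw [wt_dbl_add_emap] at hw
    have hzE : z ∈ evenCode n := by rw [evenCode_eq_ker]; exact hz
    by_cases hy0 : y = 0
    · subst hy0
      left
      have h0 : wt (0 : Fin n → ZMod 2) = 0 := by simp [wt]
      have hfe : (Finset.univ.filter (fun i => z i ≠ 0 ∧ (0 : Fin n → ZMod 2) i = 0))
          = Finset.univ.filter (fun i => z i ≠ 0) := by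
        apply Finset.filter_congr; intro i _; simp
      rw [h0, hfe] at hw
      have hwz : wt z = 2 := by rw [wt]; omega
      refine ⟨z, hzE, hwz, ?_⟩
      have : emap (0 : Fin n → ZMod 2) = 0 := by funext i; simp [emap]
      rw [this, add_zero]
    · right
      have h4 : 4 ≤ wt y := hmin y hy hy0
      have hwy : wt y = 4 := by omega
      have hcard : (Finset.univ.filter (fun i => z i ≠ 0 ∧ y i = 0)).card = 0 := by omega
      refine ⟨y, hy, hwy, z, hzE, ?_, add_comm (dbl z) (emap y)⟩
      intro i hi hyi
      have : i ∈ Finset.univ.filter (fun i => z i ≠ 0 ∧ y i = 0) := by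
        simp [hi, hyi]
      rw [Finset.card_eq_zero] at hcard
      simp [hcard] at this
  · rintro (⟨x, hx, hwx, rfl⟩ | ⟨y, hy, hwy, z, hz, hsupp, rfl⟩)
    · constructor
      · exact Submodule.subset_span (Or.inl ⟨x, hx, rfl⟩)
      · have : dbl x = dbl x + emap (0 : Fin n → ZMod 2) := by
          funext i; simp [emap]
        rw [this, wt_dbl_add_emap]
        have h0 : wt (0 : Fin n → ZMod 2) = 0 := by simp [wt]
        have hfe : (Finset.univ.filter (fun i => x i ≠ 0 ∧ (0 : Fin n → ZMod 2) i = 0))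
            = Finset.univ.filter (fun i => x i ≠ 0) := by
          apply Finset.filter_congr; intro i _; simp
        rw [h0, hfe]
        have : (Finset.univ.filter (fun i => x i ≠ 0)).card = 2 := hwx
        omega
    · constructor
      · exact Submodule.add_mem _ (Submodule.subset_span (Or.inr ⟨y, hy, rfl⟩))
          (Submodule.subset_span (Or.inl ⟨z, hz, rfl⟩))
      · rw [add_comm, wt_dbl_add_emap, hwy]
        have : (Finset.univ.filter (fun i => z i ≠ 0 ∧ y i = 0)).card = 0 := by
          rw [Finset.card_eq_zero, Finset.filter_eq_empty_iff]
          intro i _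
          rintro ⟨hzi, hyi⟩
          exact hsupp i hzi hyi
        omega
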